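/- Let Π be a finite balanced set of Poisson edges and for k : V → ℕ (with k_x at most the out-degree of x in Π) let Π_k ⊆ Π consist, for each vertex x, of the k_x outgoing Poisson edges from x with the highest times. If Π_k is balanced (∂n(Π_k) = 0), then every cycle of the proper cycle partition C(Π_k) is a cycle of C(Π), i.e., C(Π_k) ⊆ C(Π). -/

import Mathlib

open scoped Classical

namespace BKT

/-- A Poisson edge: a directed edge of a graph on `V` decorated with a time. -/
abbrev PEdge (V : Type*) := (V × V) × ℝ

variable {V : Type*}

/-- The edges of `Π` going out of `x`. -/
noncomputable def outEdges (Pi : Finset (PEdge V)) (x : V) : Finset (PEdge V) :=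
  Pi.filter (fun e => e.1.1 = x)

/-- The edges of `Π` coming into `x`. -/
noncomputable def inEdges (Pi : Finset (PEdge V)) (x : V) : Finset (PEdge V) :=
  Pi.filter (fun e => e.1.2 = x)

/-- `Π` is balanced: at every vertex the in-degree equals the out-degree. -/
def Balanced (Pi : Finset (PEdge V)) : Prop :=
  ∀ x : V, (outEdges Pi x).card = (inEdges Pi x).card

/-- All times of the Poisson edges of `Π` are distinct. -/
def DistinctTimes (Pi : Finset (PEdge V)) : Prop :=
  ∀ e ∈ Pi, ∀ e' ∈ Pi, e.2 = e'.2 → e = e'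

/-- The edge `e` touches the vertex `x`. -/
def touches (e : PEdge V) (x : V) : Prop := e.1.1 = x ∨ e.1.2 = x

/-- The set of vertices incident to some edge of `η`. -/
noncomputable def verts (η : Finset (PEdge V)) : Finset V :=
  η.image (fun e => e.1.1) ∪ η.image (fun e => e.1.2)

/-- The edge set `η` is connected: no nontrivial split into two parts that do
not share a vertex. -/
def ConnectedEdges (η : Finset (PEdge V)) : Prop :=
  ∀ s ⊆ η, s.Nonempty → s ≠ η →
    ∃ e ∈ s, ∃ e' ∈ η \ s, ∃ x : V, touches e x ∧ touches e' x

/-- `η` is a cycle: a nonempty connected set of Poisson edges in which every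
visited vertex has in-degree and out-degree exactly one. -/
def IsCycle (η : Finset (PEdge V)) : Prop :=
  η.Nonempty ∧ ConnectedEdges η ∧
    ∀ x ∈ verts η, (outEdges η x).card = 1 ∧ (inEdges η x).card = 1

/-- `P` is a partition of `Π` into cycles. -/
def IsCyclePartition (Pi : Finset (PEdge V)) (P : Finset (Finset (PEdge V))) : Prop :=
  (∀ η ∈ P, IsCycle η) ∧ (∀ η ∈ P, η ⊆ Pi) ∧
    (∀ η ∈ P, ∀ η' ∈ P, η ≠ η' → Disjoint η η') ∧
    (∀ e ∈ Pi, ∃ η ∈ P, e ∈ η)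

/-- One step of the activation-time relation: `η` and `η'` share a vertex at
which the activation time of `η` is at most that of `η'`. -/
def stepRel (η η' : Finset (PEdge V)) : Prop :=
  ∃ e ∈ η, ∃ e' ∈ η', e.1.1 = e'.1.1 ∧ e.2 ≤ e'.2

/-- The relation `⪯` on a cycle partition `P`, generated by chains of cycles
in `P` with nondecreasing activation times at shared vertices. -/
def precRel (P : Finset (Finset (PEdge V))) (η η' : Finset (PEdge V)) : Prop :=
  Relation.ReflTransGen (fun a b => a ∈ P ∧ b ∈ P ∧ stepRel a b) η η'

/-- `P` is a proper cycle partition of `Π`: a cycle partition on which `⪯`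
is a partial order (i.e., antisymmetric). -/
def IsProperCyclePartition (Pi : Finset (PEdge V)) (P : Finset (Finset (PEdge V))) : Prop :=
  IsCyclePartition Pi P ∧
    ∀ η ∈ P, ∀ η' ∈ P, precRel P η η' → precRel P η' η → η = η'


/-- `Π_k`: for each vertex `x`, the `k x` outgoing Poisson edges from `x` with
the highest times (an edge is kept iff at most `k x` outgoing edges from the
same vertex have a time at least as large). -/
noncomputable def topK (Pi : Finset (PEdge V)) (k : V → ℕ) : Finset (PEdge V) :=
  Pi.filter (fun e => ((outEdges Pi e.1.1).filter (fun f => e.2 ≤ f.2)).card ≤ k e.1.1)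

/-! ### Auxiliary lemmas -/

lemma mem_outEdges {Pi : Finset (PEdge V)} {x : V} {e : PEdge V} :
    e ∈ outEdges Pi x ↔ e ∈ Pi ∧ e.1.1 = x := Finset.mem_filter

lemma mem_inEdges {Pi : Finset (PEdge V)} {x : V} {e : PEdge V} :
    e ∈ inEdges Pi x ↔ e ∈ Pi ∧ e.1.2 = x := Finset.mem_filter

lemma src_mem_verts {η : Finset (PEdge V)} {e : PEdge V} (he : e ∈ η) :
    e.1.1 ∈ verts η :=
  Finset.mem_union_left _ (Finset.mem_image_of_mem _ he)

lemma tgt_mem_verts {η : Finset (PEdge V)} {e : PEdge V} (he : e ∈ η) :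
    e.1.2 ∈ verts η :=
  Finset.mem_union_right _ (Finset.mem_image_of_mem _ he)

/-- A finite set with a transitive relation that is antisymmetric on it has a
maximal element. -/
lemma exists_maximal_rel {α : Type*} (r : α → α → Prop)
    (htr : ∀ a b c, r a b → r b c → r a c) :
    ∀ s : Finset α, s.Nonempty →
      (∀ a ∈ s, ∀ b ∈ s, r a b → r b a → a = b) →
      ∃ m ∈ s, ∀ x ∈ s, r m x → x = m := by
  intro s
  induction s using Finset.strongInduction with
  | _ s ih =>
    intro hs hanti
    obtain ⟨a, ha⟩ := hs
    by_cases hA : ∃ x ∈ s, r a x ∧ x ≠ a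
    · classical
      set t := s.filter (fun x => r a x ∧ x ≠ a) with htdef
      obtain ⟨x₀, hx₀, hrx₀, hne₀⟩ := hA
      have htne : t.Nonempty := ⟨x₀, Finset.mem_filter.mpr ⟨hx₀, hrx₀, hne₀⟩⟩
      have hts : t ⊂ s := by
        refine (Finset.ssubset_iff_of_subset (Finset.filter_subset _ _)).mpr ⟨a, ha, ?_⟩
        simp [htdef]
      obtain ⟨m, hm, hmax⟩ := ih t hts htne
        (fun b hb c hc => hanti b (Finset.filter_subset _ _ hb) c (Finset.filter_subset _ _ hc))
      have hmt := Finset.mem_filter.mp hm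
      refine ⟨m, hmt.1, ?_⟩
      intro x hx hrmx
      by_cases hxa : x = a
      · subst hxa
        exact hanti x hx m hmt.1 hmt.2.1 hrmx
      · exact hmax x (Finset.mem_filter.mpr ⟨hx, htr a m x hmt.2.1 hrmx, hxa⟩) hrmx
    · push_neg at hA
      exact ⟨a, ha, hA⟩

lemma card_eq_sum_out (t : Finset (PEdge V)) :
    t.card = ∑ y ∈ verts t, (outEdges t y).card := by
  classical
  exact Finset.card_eq_sum_card_fiberwise (fun e he => src_mem_verts he)

lemma card_eq_sum_in (t : Finset (PEdge V)) :
    t.card = ∑ y ∈ verts t, (inEdges t y).card := by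
  classical
  exact Finset.card_eq_sum_card_fiberwise (fun e he => tgt_mem_verts he)

/-- A nonempty "balanced" subset of a cycle is the whole cycle. -/
lemma cycle_eq_of_balanced_subset {ζ t : Finset (PEdge V)} (hc : IsCycle ζ)
    (hts : t ⊆ ζ) (htne : t.Nonempty)
    (hbal : ∀ y, (outEdges t y).card = (inEdges t y).card) : t = ζ := by
  by_contra hne
  obtain ⟨e, he, e', he', x, hex, he'x⟩ := hc.2.1 t hts htne hne
  have heζ : e ∈ ζ := hts he
  have hxζ : x ∈ verts ζ := by
    rcases hex with h | h
    · exact h ▸ src_mem_verts heζ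
    · exact h ▸ tgt_mem_verts heζ
  obtain ⟨ho1, hi1⟩ := hc.2.2 x hxζ
  have h1 : 0 < (outEdges t x).card := by
    rcases hex with h | h
    · exact Finset.card_pos.mpr ⟨e, mem_outEdges.mpr ⟨he, h⟩⟩
    · rw [hbal]
      exact Finset.card_pos.mpr ⟨e, mem_inEdges.mpr ⟨he, h⟩⟩
  have h2 : 0 < (inEdges t x).card := by rw [← hbal]; exact h1
  obtain ⟨a, ha⟩ := Finset.card_pos.mp h1
  obtain ⟨b, hb⟩ := Finset.card_pos.mp h2
  have he'ζ : e' ∈ ζ := (Finset.mem_sdiff.mp he').1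
  have he't : e' ∉ t := (Finset.mem_sdiff.mp he').2
  rcases he'x with h | h
  · have haζ : a ∈ outEdges ζ x :=
      mem_outEdges.mpr ⟨hts (mem_outEdges.mp ha).1, (mem_outEdges.mp ha).2⟩
    have he'o : e' ∈ outEdges ζ x := mem_outEdges.mpr ⟨he'ζ, h⟩
    have : e' = a := Finset.card_le_one.mp (le_of_eq ho1) _ he'o _ haζ
    exact he't (this ▸ (mem_outEdges.mp ha).1)
  · have hbζ : b ∈ inEdges ζ x :=
      mem_inEdges.mpr ⟨hts (mem_inEdges.mp hb).1, (mem_inEdges.mp hb).2⟩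
    have he'i : e' ∈ inEdges ζ x := mem_inEdges.mpr ⟨he'ζ, h⟩
    have : e' = b := Finset.card_le_one.mp (le_of_eq hi1) _ he'i _ hbζ
    exact he't (this ▸ (mem_inEdges.mp hb).1)

/-- The key step: a `⪯`-maximal cycle of a proper partition of a per-vertex
upward-closed subset `Π'` of `Π` belongs to any proper partition of `Π`. -/
lemma max_mem_P {Pi Pi' : Finset (PEdge V)} (hsub : Pi' ⊆ Pi)
    (hdist : DistinctTimes Pi)
    (hup : ∀ e ∈ Pi', ∀ f ∈ Pi, f.1.1 = e.1.1 → e.2 ≤ f.2 → f ∈ Pi')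
    {P Q : Finset (Finset (PEdge V))}
    (hP : IsProperCyclePartition Pi P) (hQ : IsProperCyclePartition Pi' Q)
    {η : Finset (PEdge V)} (hη : η ∈ Q)
    (hmax : ∀ ζ ∈ Q, precRel Q η ζ → ζ = η) : η ∈ P := by
  classical
  obtain ⟨⟨hQcyc, hQsub, hQdisj, hQcov⟩, hQanti⟩ := hQ
  obtain ⟨⟨hPcyc, hPsub, hPdisj, hPcov⟩, hPanti⟩ := hP
  have hηcyc := hQcyc η hη
  have hηPi' : η ⊆ Pi' := hQsub η hη
  -- Step A: every edge of η has the maximal time among the edges of Π out of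
  -- its source vertex.
  have hA : ∀ e ∈ η, ∀ g ∈ Pi, g.1.1 = e.1.1 → g.2 ≤ e.2 := by
    intro e he g hg hgsrc
    have hL3 : ∀ e' ∈ outEdges Pi' e.1.1, e'.2 ≤ e.2 := by
      intro e' he'
      obtain ⟨he'Pi', he'src⟩ := mem_outEdges.mp he'
      rcases le_total e'.2 e.2 with h | h
      · exact h
      · obtain ⟨ζ, hζQ, he'ζ⟩ := hQcov e' he'Pi'
        have hstep : precRel Q η ζ :=
          Relation.ReflTransGen.single ⟨hη, hζQ, e, he, e', he'ζ, he'src.symm, h⟩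
        have hζη : ζ = η := hmax ζ hζQ hstep
        have he'η : e' ∈ η := hζη ▸ he'ζ
        have h1 := (hηcyc.2.2 e.1.1 (src_mem_verts he)).1
        have he'e : e' = e :=
          Finset.card_le_one.mp (le_of_eq h1) _ (mem_outEdges.mpr ⟨he'η, he'src⟩)
            _ (mem_outEdges.mpr ⟨he, rfl⟩)
        exact le_of_eq (congrArg Prod.snd he'e)
    have hne : (outEdges Pi e.1.1).Nonempty :=
      ⟨e, mem_outEdges.mpr ⟨hsub (hηPi' he), rfl⟩⟩
    obtain ⟨f, hf, hfmax⟩ := Finset.exists_max_image (outEdges Pi e.1.1) (fun e => e.2) hne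
    obtain ⟨hfPi, hfsrc⟩ := mem_outEdges.mp hf
    have hfPi' : f ∈ Pi' :=
      hup e (hηPi' he) f hfPi hfsrc (hfmax e (mem_outEdges.mpr ⟨hsub (hηPi' he), rfl⟩))
    have hf2 : f.2 ≤ e.2 := hL3 f (mem_outEdges.mpr ⟨hfPi', hfsrc⟩)
    exact le_trans (hfmax g (mem_outEdges.mpr ⟨hg, hgsrc⟩)) hf2
  -- Step B: take a maximal cycle ζ of P among those meeting η.
  set A := P.filter (fun ζ => (ζ ∩ η).Nonempty) with hAdef
  have hAne : A.Nonempty := by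
    obtain ⟨e₀, he₀⟩ := hηcyc.1
    obtain ⟨ζ₀, hζ₀, he₀ζ⟩ := hPcov e₀ (hsub (hηPi' he₀))
    exact ⟨ζ₀, Finset.mem_filter.mpr ⟨hζ₀, ⟨e₀, Finset.mem_inter.mpr ⟨he₀ζ, he₀⟩⟩⟩⟩
  obtain ⟨ζ, hζA, hζmax⟩ := exists_maximal_rel (precRel P)
    (fun a b c => Relation.ReflTransGen.trans) A hAne
    (fun a ha b hb => hPanti a (Finset.filter_subset _ _ ha) b (Finset.filter_subset _ _ hb))
  have hζP : ζ ∈ P := (Finset.mem_filter.mp hζA).1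
  have hζcyc := hPcyc ζ hζP
  have hζPi : ζ ⊆ Pi := hPsub ζ hζP
  -- Step C: at any common vertex, ζ and η use the same outgoing edge.
  have hKS : ∀ y, y ∈ verts ζ → y ∈ verts η →
      ∃ c, c ∈ ζ ∧ c ∈ η ∧ outEdges ζ y = {c} ∧ outEdges η y = {c} := by
    intro y hyζ hyη
    obtain ⟨cζ, hcζ⟩ := Finset.card_eq_one.mp (hζcyc.2.2 y hyζ).1
    obtain ⟨cη, hcη⟩ := Finset.card_eq_one.mp (hηcyc.2.2 y hyη).1
    have hcζζ : cζ ∈ ζ ∧ cζ.1.1 = y :=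
      mem_outEdges.mp (hcζ ▸ Finset.mem_singleton_self cζ)
    have hcηη : cη ∈ η ∧ cη.1.1 = y :=
      mem_outEdges.mp (hcη ▸ Finset.mem_singleton_self cη)
    have hle : cζ.2 ≤ cη.2 :=
      hA cη hcηη.1 cζ (hζPi hcζζ.1) (by rw [hcζζ.2, hcηη.2])
    obtain ⟨ξ, hξP, hcηξ⟩ := hPcov cη (hsub (hηPi' hcηη.1))
    have hstep : precRel P ζ ξ :=
      Relation.ReflTransGen.single ⟨hζP, hξP, cζ, hcζζ.1, cη, hcηξ, by rw [hcζζ.2, hcηη.2], hle⟩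
    have hξA : ξ ∈ A :=
      Finset.mem_filter.mpr ⟨hξP, ⟨cη, Finset.mem_inter.mpr ⟨hcηξ, hcηη.1⟩⟩⟩
    have hξζ : ξ = ζ := hζmax ξ hξA hstep
    have hcηζ : cη ∈ ζ := hξζ ▸ hcηξ
    have hmem : cη ∈ outEdges ζ y := mem_outEdges.mpr ⟨hcηζ, hcηη.2⟩
    rw [hcζ, Finset.mem_singleton] at hmem
    exact ⟨cη, hcηζ, hcηη.1, by rw [hcζ, hmem], hcη⟩
  -- Step D: s = ζ ∩ η is balanced.
  set s := ζ ∩ η with hsdef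
  have hsub_sζ : s ⊆ ζ := Finset.inter_subset_left
  have hsub_sη : s ⊆ η := Finset.inter_subset_right
  have hsne : s.Nonempty := (Finset.mem_filter.mp hζA).2
  have hpt : ∀ y ∈ verts s, (inEdges s y).card ≤ (outEdges s y).card := by
    intro y hy
    by_cases hin : (inEdges s y).Nonempty
    · obtain ⟨e, he⟩ := hin
      obtain ⟨hes, hesrc⟩ := mem_inEdges.mp he
      have heζ : e ∈ ζ := hsub_sζ hes
      have heη : e ∈ η := hsub_sη hes
      have hyζ : y ∈ verts ζ := hesrc ▸ tgt_mem_verts heζ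
      have hyη : y ∈ verts η := hesrc ▸ tgt_mem_verts heη
      obtain ⟨c, hcζ, hcη, hoζ, hoη⟩ := hKS y hyζ hyη
      have hcout : c ∈ outEdges s y :=
        mem_outEdges.mpr ⟨Finset.mem_inter.mpr ⟨hcζ, hcη⟩,
          (mem_outEdges.mp (hoζ ▸ Finset.mem_singleton_self c)).2⟩
      have h1 : 1 ≤ (outEdges s y).card := Finset.card_pos.mpr ⟨c, hcout⟩
      have h2 : (inEdges s y).card ≤ 1 := by
        have hmono : inEdges s y ⊆ inEdges ζ y :=
          Finset.filter_subset_filter _ hsub_sζ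
        exact le_trans (Finset.card_le_card hmono) (le_of_eq (hζcyc.2.2 y hyζ).2)
      omega
    · simp [Finset.not_nonempty_iff_eq_empty.mp hin]
  have hsumo : s.card = ∑ y ∈ verts s, (outEdges s y).card := card_eq_sum_out s
  have hsumi : s.card = ∑ y ∈ verts s, (inEdges s y).card := card_eq_sum_in s
  have heq : ∀ y ∈ verts s, (inEdges s y).card = (outEdges s y).card :=
    (Finset.sum_eq_sum_iff_of_le hpt).mp (by rw [← hsumi, ← hsumo])
  have hbalS : ∀ y, (outEdges s y).card = (inEdges s y).card := by
    intro y
    by_cases hy : y ∈ verts s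
    · exact (heq y hy).symm
    · have ho : outEdges s y = ∅ :=
        Finset.eq_empty_of_forall_notMem (fun e he => by
          obtain ⟨h1, h2⟩ := mem_outEdges.mp he
          exact hy (h2 ▸ src_mem_verts h1))
      have hi : inEdges s y = ∅ :=
        Finset.eq_empty_of_forall_notMem (fun e he => by
          obtain ⟨h1, h2⟩ := mem_inEdges.mp he
          exact hy (h2 ▸ tgt_mem_verts h1))
      rw [ho, hi]
  -- Step E/F: s = ζ and s = η, hence η = ζ ∈ P.
  have hsζ : s = ζ := cycle_eq_of_balanced_subset hζcyc hsub_sζ hsne hbalS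
  have hsη : s = η := cycle_eq_of_balanced_subset hηcyc hsub_sη hsne hbalS
  rw [← hsη, hsζ]
  exact hζP

/-- Removing a cycle of a proper partition keeps things proper. -/
lemma erase_proper {Pi : Finset (PEdge V)} {P : Finset (Finset (PEdge V))}
    (hP : IsProperCyclePartition Pi P) {η : Finset (PEdge V)} (hη : η ∈ P) :
    IsProperCyclePartition (Pi \ η) (P.erase η) := by
  obtain ⟨⟨hcyc, hsub, hdisj, hcov⟩, hanti⟩ := hP
  refine ⟨⟨?_, ?_, ?_, ?_⟩, ?_⟩
  · intro ζ hζ; exact hcyc ζ (Finset.mem_of_mem_erase hζ)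
  · intro ζ hζ
    obtain ⟨hne, hζP⟩ := Finset.mem_erase.mp hζ
    intro e he
    refine Finset.mem_sdiff.mpr ⟨hsub ζ hζP he, ?_⟩
    exact fun heη => (Finset.disjoint_left.mp (hdisj ζ hζP η hη hne) he) heη
  · intro a ha b hb hab
    exact hdisj a (Finset.mem_of_mem_erase ha) b (Finset.mem_of_mem_erase hb) hab
  · intro e he
    obtain ⟨hePi, heη⟩ := Finset.mem_sdiff.mp he
    obtain ⟨ζ, hζ, heζ⟩ := hcov e hePi
    refine ⟨ζ, Finset.mem_erase.mpr ⟨?_, hζ⟩, heζ⟩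
    rintro rfl; exact heη heζ
  · intro a ha b hb h1 h2
    have hmono : ∀ x y : Finset (PEdge V), precRel (P.erase η) x y → precRel P x y :=
      fun x y h => Relation.ReflTransGen.mono (r := fun a b => a ∈ P.erase η ∧ b ∈ P.erase η ∧ stepRel a b)
          (p := fun a b => a ∈ P ∧ b ∈ P ∧ stepRel a b)
        (fun u v huv => ⟨Finset.mem_of_mem_erase huv.1, Finset.mem_of_mem_erase huv.2.1, huv.2.2⟩) x y h
    exact hanti a (Finset.mem_of_mem_erase ha) b (Finset.mem_of_mem_erase hb)
      (hmono _ _ h1) (hmono _ _ h2)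

/-- Main induction: the proper partition of any per-vertex upward-closed
subset of `Π` is contained in the proper partition of `Π`. -/
lemma main_sub : ∀ n (Pi Pi' : Finset (PEdge V)), Pi'.card ≤ n → Pi' ⊆ Pi →
    DistinctTimes Pi →
    (∀ e ∈ Pi', ∀ f ∈ Pi, f.1.1 = e.1.1 → e.2 ≤ f.2 → f ∈ Pi') →
    ∀ P Q : Finset (Finset (PEdge V)), IsProperCyclePartition Pi P →
      IsProperCyclePartition Pi' Q → Q ⊆ P := by
  intro n
  induction n with
  | zero =>
    intro Pi Pi' hcard hsub hdist hup P Q hP hQ ζ hζ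
    exfalso
    have h1 : Pi' = ∅ := Finset.card_eq_zero.mp (Nat.le_zero.mp hcard)
    obtain ⟨e, he⟩ := (hQ.1.1 ζ hζ).1
    have := hQ.1.2.1 ζ hζ he
    simp [h1] at this
  | succ n ih =>
    intro Pi Pi' hcard hsub hdist hup P Q hP hQ
    by_cases hQne : Q.Nonempty
    · obtain ⟨η, hηQ, hηmax⟩ := exists_maximal_rel (precRel Q)
        (fun a b c => Relation.ReflTransGen.trans) Q hQne (fun a ha b hb => hQ.2 a ha b hb)
      have hηP : η ∈ P := max_mem_P hsub hdist hup hP hQ hηQ hηmax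
      have hηcyc := hQ.1.1 η hηQ
      have hηPi' : η ⊆ Pi' := hQ.1.2.1 η hηQ
      have hP' : IsProperCyclePartition (Pi \ η) (P.erase η) := erase_proper hP hηP
      have hQ' : IsProperCyclePartition (Pi' \ η) (Q.erase η) := erase_proper hQ hηQ
      have hcard' : (Pi' \ η).card ≤ n := by
        have h1 : 0 < η.card := Finset.card_pos.mpr hηcyc.1
        have h2 := Finset.card_sdiff_of_subset hηPi'
        have h3 := Finset.card_le_card hηPi'
        omega
      have hsub' : Pi' \ η ⊆ Pi \ η := Finset.sdiff_subset_sdiff hsub (le_refl _)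
      have hdist' : DistinctTimes (Pi \ η) := fun e he e' he' =>
        hdist e (Finset.mem_sdiff.mp he).1 e' (Finset.mem_sdiff.mp he').1
      have hup' : ∀ e ∈ Pi' \ η, ∀ f ∈ Pi \ η, f.1.1 = e.1.1 → e.2 ≤ f.2 → f ∈ Pi' \ η := by
        intro e he f hf hsrc hle
        obtain ⟨he1, he2⟩ := Finset.mem_sdiff.mp he
        obtain ⟨hf1, hf2⟩ := Finset.mem_sdiff.mp hf
        exact Finset.mem_sdiff.mpr ⟨hup e he1 f hf1 hsrc hle, hf2⟩
      have hrec := ih (Pi \ η) (Pi' \ η) hcard' hsub' hdist' hup' _ _ hP' hQ'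
      intro ζ hζ
      by_cases hζη : ζ = η
      · exact hζη ▸ hηP
      · exact Finset.mem_of_mem_erase (hrec (Finset.mem_erase.mpr ⟨hζη, hζ⟩))
    · intro ζ hζ
      exact absurd ⟨ζ, hζ⟩ hQne

/-- If `Π_k` is balanced, then every cycle of the proper cycle partition of
`Π_k` is a cycle of the proper cycle partition of `Π`. -/
theorem topK_cycles_subset
    (Pi : Finset (PEdge V)) (hdist : DistinctTimes Pi) (hbal : Balanced Pi)
    (k : V → ℕ) (hbalk : Balanced (topK Pi k))
    (P Q : Finset (Finset (PEdge V)))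
    (hP : IsProperCyclePartition Pi P)
    (hQ : IsProperCyclePartition (topK Pi k) Q) :
    Q ⊆ P := by
  have hsub : topK Pi k ⊆ Pi := Finset.filter_subset _ _
  have hup : ∀ e ∈ topK Pi k, ∀ f ∈ Pi, f.1.1 = e.1.1 → e.2 ≤ f.2 → f ∈ topK Pi k := by
    intro e he f hf hsrc hle
    obtain ⟨hePi, hecard⟩ := Finset.mem_filter.mp he
    refine Finset.mem_filter.mpr ⟨hf, ?_⟩
    rw [hsrc]
    refine le_trans (Finset.card_le_card ?_) hecard
    intro g hg
    obtain ⟨hg1, hg2⟩ := Finset.mem_filter.mp hg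
    exact Finset.mem_filter.mpr ⟨hg1, le_trans hle hg2⟩
  exact main_sub (topK Pi k).card Pi (topK Pi k) le_rfl hsub hdist hup P Q hP hQ

end BKT
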